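/- Let ℓ² be the Hilbert space of square-summable real sequences on ℤ and B the operator (Bu)_m = u_{m+1} − u_m. Let χ:[0,∞)→[0,1] be continuously differentiable with |χ'(x)| ≤ χ_0 for all x≥0, and let M be a positive integer. For u∈ℓ² define p∈ℓ² by p_m = χ(|m|/M) u_m. Then (Bu, Bp) ≥ Σ_{m∈ℤ} χ(|m|/M) |(Bu)_m|² − (2χ_0/M)‖u‖². -/

import Mathlib

set_option maxHeartbeats 1000000


noncomputable section

/-- `(Bu)_m = u_{m+1} − u_m`. -/
def opB (u : ℤ → ℝ) : ℤ → ℝ := fun m => u (m + 1) - u m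

/-- Let `u ∈ ℓ²`, `χ : [0,∞) → [0,1]` continuously differentiable
with `|χ'(x)| ≤ χ₀` for all `x ≥ 0`, `M` a positive integer, and define `p ∈ ℓ²` by
`p_m = χ(|m|/M)u_m`.  Then
`(Bu, Bp) ≥ Σ_{m∈ℤ} χ(|m|/M)|(Bu)_m|² − (2χ₀/M)‖u‖²`. -/
theorem stmt_13 (u : ℤ → ℝ) (hu : Memℓp u 2)
    (χ χ' : ℝ → ℝ) (χ₀ : ℝ)
    (hderiv : ∀ x : ℝ, 0 ≤ x → HasDerivAt χ (χ' x) x)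
    (hχ'cont : ContinuousOn χ' (Set.Ici 0))
    (hχrange : ∀ x : ℝ, 0 ≤ x → χ x ∈ Set.Icc (0 : ℝ) 1)
    (hχ'bdd : ∀ x : ℝ, 0 ≤ x → |χ' x| ≤ χ₀)
    (M : ℕ) (hM : 0 < M)
    (p : ℤ → ℝ) (hp : ∀ m : ℤ, p m = χ ((|m| : ℤ) / (M : ℝ)) * u m) :
    (∑' m : ℤ, opB u m * opB p m) ≥
      (∑' m : ℤ, χ ((|m| : ℤ) / (M : ℝ)) * (opB u m) ^ 2)
        - (2 * χ₀ / M) * ∑' m : ℤ, (u m) ^ 2 := by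
  set c : ℤ → ℝ := fun m => χ ((|m| : ℤ) / (M : ℝ)) with hcdef
  have hM0 : (0:ℝ) < M := by exact_mod_cast hM
  have hχ₀ : 0 ≤ χ₀ := le_trans (abs_nonneg _) (hχ'bdd 0 le_rfl)
  -- χ is χ₀-Lipschitz on [0, ∞)
  have lip : ∀ a b : ℝ, 0 ≤ a → 0 ≤ b → |χ b - χ a| ≤ χ₀ * |b - a| := by
    intro a b ha hb
    have := Convex.norm_image_sub_le_of_norm_hasDerivWithin_le
      (f := χ) (f' := χ') (s := Set.Ici (0:ℝ)) (C := χ₀)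
      (fun x hx => (hderiv x hx).hasDerivWithinAt)
      (fun x hx => by simpa [Real.norm_eq_abs] using hχ'bdd x hx)
      (convex_Ici 0) ha hb
    simpa [Real.norm_eq_abs] using this
  have hargnn : ∀ m : ℤ, (0:ℝ) ≤ ((|m| : ℤ) : ℝ) / (M : ℝ) := by
    intro m
    have : (0:ℝ) ≤ ((|m| : ℤ) : ℝ) := by exact_mod_cast abs_nonneg m
    positivity
  have hc0 : ∀ m : ℤ, 0 ≤ c m := fun m => (hχrange _ (hargnn m)).1
  have hc1 : ∀ m : ℤ, c m ≤ 1 := fun m => (hχrange _ (hargnn m)).2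
  -- bound on increments of c
  have hcdiff : ∀ m : ℤ, |c (m+1) - c m| ≤ χ₀ / M := by
    intro m
    have h1 : |c (m+1) - c m| ≤
        χ₀ * |((|m+1| : ℤ) : ℝ) / (M : ℝ) - ((|m| : ℤ) : ℝ) / (M : ℝ)| :=
      lip _ _ (hargnn m) (hargnn (m+1))
    have h2 : |((|m+1| : ℤ) : ℝ) / (M : ℝ) - ((|m| : ℤ) : ℝ) / (M : ℝ)| ≤ 1 / M := by
      have hZ : |(|m+1| : ℤ) - (|m| : ℤ)| ≤ 1 := by
        have := abs_abs_sub_abs_le_abs_sub (m+1) m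
        simpa using this
      have hR : |((|m+1| : ℤ) : ℝ) - ((|m| : ℤ) : ℝ)| ≤ 1 := by
        have : |(((|m+1| : ℤ) - (|m| : ℤ) : ℤ) : ℝ)| ≤ 1 := by
          rw [← Int.cast_abs]; exact_mod_cast hZ
        simpa using this
      rw [div_sub_div_same, abs_div, abs_of_pos hM0]
      exact div_le_div_of_nonneg_right hR hM0.le
    calc |c (m+1) - c m| ≤ χ₀ * (1 / M) :=
          h1.trans (mul_le_mul_of_nonneg_left h2 hχ₀)
      _ = χ₀ / M := by ring
  -- summability facts
  have hu2 : Summable fun m : ℤ => (u m) ^ 2 := by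
    have := hu.summable (p := 2) (by norm_num)
    have heq : (fun m : ℤ => ‖u m‖ ^ (2 : ENNReal).toReal) = fun m : ℤ => (u m) ^ 2 := by
      funext m
      rw [ENNReal.toReal_ofNat, Real.rpow_two, Real.norm_eq_abs, sq_abs]
    rwa [heq] at this
  have hu2' : Summable fun m : ℤ => (u (m+1)) ^ 2 := by
    have := hu2.comp_injective (add_left_injective (1:ℤ))
    simpa [Function.comp_def] using this
  have htsum_shift : (∑' m : ℤ, (u (m+1))^2) = ∑' m : ℤ, (u m)^2 := by
    have := (Equiv.addRight (1:ℤ)).tsum_eq (f := fun m : ℤ => (u m)^2)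
    simpa using this
  have hB2 : Summable fun m : ℤ => (opB u m) ^ 2 := by
    refine Summable.of_nonneg_of_le (fun m => sq_nonneg _) (fun m => ?_)
      ((hu2'.mul_left 2).add (hu2.mul_left 2))
    simp only [opB]
    nlinarith [sq_nonneg (u (m+1) + u m)]
  have hS1 : Summable fun m : ℤ => c m * (opB u m) ^ 2 := by
    apply Summable.of_nonneg_of_le
      (fun m => mul_nonneg (hc0 m) (sq_nonneg _))
      (fun m => mul_le_of_le_one_left (sq_nonneg _) (hc1 m)) hB2
  -- the error term
  set d : ℤ → ℝ := fun m => (c (m+1) - c m) * (opB u m * u (m+1)) with hddef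
  set g : ℤ → ℝ := fun m => (χ₀ / M) * ((3/2) * (u (m+1))^2 + (1/2) * (u m)^2)
    with hgdef
  have hdg : ∀ m : ℤ, |d m| ≤ g m := by
    intro m
    have h1 : |d m| = |c (m+1) - c m| * |opB u m * u (m+1)| := abs_mul _ _
    have h2 : |opB u m * u (m+1)| ≤ (3/2) * (u (m+1))^2 + (1/2) * (u m)^2 := by
      have := abs_mul (opB u m) (u (m+1))
      rw [this]
      have hb : |opB u m| ≤ |u (m+1)| + |u m| := by
        simpa [opB] using abs_sub (u (m+1)) (u m)
      nlinarith [sq_abs (u m), sq_abs (u (m+1)), abs_nonneg (u m),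
        abs_nonneg (u (m+1)), sq_nonneg (|u m| - |u (m+1)|), abs_nonneg (opB u m)]
    calc |d m| = |c (m+1) - c m| * |opB u m * u (m+1)| := h1
      _ ≤ (χ₀ / M) * ((3/2) * (u (m+1))^2 + (1/2) * (u m)^2) :=
          mul_le_mul (hcdiff m) h2 (abs_nonneg _) (by positivity)
      _ = g m := rfl
  have hg : Summable g :=
    (((hu2'.mul_left (3/2)).add (hu2.mul_left (1/2))).mul_left (χ₀ / M))
  have hdabs : Summable fun m => |d m| :=
    Summable.of_nonneg_of_le (fun m => abs_nonneg _) hdg hg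
  have hd : Summable d := hdabs.of_abs
  -- tsum of g
  have htg : (∑' m : ℤ, g m) = (2 * χ₀ / M) * ∑' m : ℤ, (u m)^2 := by
    rw [hgdef, tsum_mul_left,
      Summable.tsum_add (hu2'.mul_left (3/2)) (hu2.mul_left (1/2)),
      tsum_mul_left, tsum_mul_left, htsum_shift]
    ring
  -- bound on the error term
  have hdbound : -((2 * χ₀ / M) * ∑' m : ℤ, (u m)^2) ≤ ∑' m : ℤ, d m := by
    have h1 : |∑' m : ℤ, d m| ≤ ∑' m : ℤ, |d m| := by
      simpa [Real.norm_eq_abs] using norm_tsum_le_tsum_norm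
        (f := d) (by simpa [Real.norm_eq_abs] using hdabs)
    have h2 : (∑' m : ℤ, |d m|) ≤ ∑' m : ℤ, g m := Summable.tsum_le_tsum hdg hdabs hg
    have := (abs_le.1 (h1.trans (h2.trans_eq htg))).1
    linarith
  -- the key pointwise identity
  have hkey : ∀ m : ℤ, opB u m * opB p m = c m * (opB u m)^2 + d m := by
    intro m
    simp only [opB, hddef, hp, hcdef]
    ring
  calc (∑' m : ℤ, opB u m * opB p m)
      = ∑' m : ℤ, (c m * (opB u m)^2 + d m) := by
        exact tsum_congr hkey
    _ = (∑' m : ℤ, c m * (opB u m)^2) + ∑' m : ℤ, d m := Summable.tsum_add hS1 hd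
    _ ≥ (∑' m : ℤ, c m * (opB u m)^2) - (2 * χ₀ / M) * ∑' m : ℤ, (u m)^2 := by
        linarith [hdbound]
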